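/- Let 0 < a < b and K ∈ (0,1) be given. Then there exists K'₀ ∈ (0,1) such that for every K' ∈ (0,K'₀) there exist constants m̃ ∈ (0,1) and m* ∈ (1,∞) with: F(m,r) > 0 for all m ∈ (m̃,1) and all r ∈ [a,b], and F(m,r) < 0 for all m ∈ (1,m*) and all r ∈ [a,b]. -/
import Mathlib


open Set

/-- For parameters `K, K' ∈ (0,1)`, the function
`F(m,r) := (r+K)^m + (1−K)·K'^(m−1) − r^m − 1` (real powers). -/
noncomputable def Ffun (K K' m r : ℝ) : ℝ :=
  (r + K) ^ m + (1 - K) * K' ^ (m - 1) - r ^ m - 1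

private lemma abs_exp_sub_one_le' (t : ℝ) : |Real.exp t - 1| ≤ |t| * Real.exp |t| := by
  rcases le_or_gt 0 t with h | h
  · rw [abs_of_nonneg h, abs_of_nonneg (by nlinarith [Real.add_one_le_exp t] : (0:ℝ) ≤ Real.exp t - 1)]
    have hmul : Real.exp (-t) * Real.exp t = 1 := by rw [← Real.exp_add]; simp
    nlinarith [Real.add_one_le_exp (-t), Real.exp_pos t]
  · have hmul : Real.exp t * Real.exp (-t) = 1 := by rw [← Real.exp_add]; simp
    have h2 : (1:ℝ) ≤ Real.exp (-t) := Real.one_le_exp (by linarith)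
    have h1 : Real.exp t ≤ 1 := by nlinarith [Real.exp_pos t]
    rw [abs_of_neg h, abs_of_nonpos (by linarith : Real.exp t - 1 ≤ 0)]
    nlinarith [Real.add_one_le_exp t]

private lemma rpow_lip (x m R : ℝ) (hx : 0 < x) (hxR : x ≤ R) (hxR' : 1/x ≤ R)
    (hm : |m - 1| ≤ 1) (hR : 1 ≤ R) :
    |x ^ m - x| ≤ R ^ 2 * Real.log R * |m - 1| := by
  have hRpos : (0:ℝ) < R := by linarith
  have hlogR : 0 ≤ Real.log R := Real.log_nonneg hR
  have hlo : -Real.log R ≤ Real.log x := by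
    have hx' : x⁻¹ ≤ R := by rwa [one_div] at hxR'
    have h := Real.log_le_log (inv_pos.mpr hx) hx'
    rw [Real.log_inv] at h
    linarith
  have hhi : Real.log x ≤ Real.log R := Real.log_le_log hx hxR
  have hlogx : |Real.log x| ≤ Real.log R := abs_le.mpr ⟨hlo, hhi⟩
  have key : x ^ m - x = x * (Real.exp ((m - 1) * Real.log x) - 1) := by
    rw [Real.rpow_def_of_pos hx, mul_sub, mul_one]
    have : x * Real.exp ((m - 1) * Real.log x)
        = Real.exp (Real.log x + (m - 1) * Real.log x) := by
      rw [Real.exp_add, Real.exp_log hx]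
    rw [this]
    ring_nf
  set t := (m - 1) * Real.log x with htdef
  have ht' : |t| ≤ |m - 1| * Real.log R := by
    rw [htdef, abs_mul]
    exact mul_le_mul_of_nonneg_left hlogx (abs_nonneg _)
  have ht1 : |t| ≤ Real.log R := le_trans ht' (by nlinarith)
  have h2 : Real.exp |t| ≤ R := by
    calc Real.exp |t| ≤ Real.exp (Real.log R) := Real.exp_le_exp.mpr ht1
    _ = R := Real.exp_log hRpos
  have h1 : |Real.exp t - 1| ≤ |t| * Real.exp |t| := abs_exp_sub_one_le' t
  rw [key, abs_mul, abs_of_pos hx]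
  calc x * |Real.exp t - 1| ≤ x * (|t| * Real.exp |t|) :=
        mul_le_mul_of_nonneg_left h1 hx.le
    _ ≤ R * ((|m - 1| * Real.log R) * R) := by
        apply mul_le_mul hxR _ (by positivity) hRpos.le
        exact mul_le_mul ht' h2 (Real.exp_pos _).le (by positivity)
    _ = R ^ 2 * Real.log R * |m - 1| := by ring

set_option maxHeartbeats 1000000 in
/-- Lemma: for `0 < a < b` and `K ∈ (0,1)`, for all sufficiently small `K' ∈ (0,1)`
there are `m̃ ∈ (0,1)` and `m* ∈ (1,∞)` such that `F(m,r) > 0` for `m ∈ (m̃,1)`,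
`r ∈ [a,b]`, and `F(m,r) < 0` for `m ∈ (1,m*)`, `r ∈ [a,b]`. -/
theorem moment_sign_intervals (a b K : ℝ) (ha : 0 < a) (hab : a < b)
    (hK : K ∈ Ioo (0 : ℝ) 1) :
    ∃ K'₀ ∈ Ioo (0 : ℝ) 1, ∀ K' ∈ Ioo (0 : ℝ) K'₀,
      ∃ mt ∈ Ioo (0 : ℝ) 1, ∃ mstar ∈ Ioi (1 : ℝ),
        (∀ m ∈ Ioo mt 1, ∀ r ∈ Icc a b, 0 < Ffun K K' m r) ∧
        (∀ m ∈ Ioo 1 mstar, ∀ r ∈ Icc a b, Ffun K K' m r < 0) := by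
  obtain ⟨hK0, hK1⟩ := hK
  obtain ⟨R, hRdef⟩ : ∃ x : ℝ, x = max (b + 1) (1/a) := ⟨_, rfl⟩
  have hRb : b + 1 ≤ R := by rw [hRdef]; exact le_max_left _ _
  have hRa : 1/a ≤ R := by rw [hRdef]; exact le_max_right _ _
  have hR1 : 1 < R := lt_of_lt_of_le (by linarith) hRb
  have hlogR : 0 < Real.log R := Real.log_pos hR1
  have hc : 0 < R ^ 2 * Real.log R := mul_pos (pow_pos (by linarith) 2) hlogR
  obtain ⟨C, hCdef⟩ : ∃ x : ℝ, x = 2 * R ^ 2 * Real.log R := ⟨_, rfl⟩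
  have hC : 0 < C := by rw [hCdef]; linarith
  have hKlt1 : (0:ℝ) < 1 - K := by linarith
  refine ⟨min (1/2) (Real.exp (-(2 * (C + 1)) / (1 - K))), ⟨?_, ?_⟩, ?_⟩
  · exact lt_min (by norm_num) (Real.exp_pos _)
  · exact lt_of_le_of_lt (min_le_left _ _) (by norm_num)
  intro K' hK'
  obtain ⟨hK'0, hK'lt⟩ := hK'
  have hK'exp : K' < Real.exp (-(2 * (C + 1)) / (1 - K)) :=
    lt_of_lt_of_le hK'lt (min_le_right _ _)
  obtain ⟨L, hLdef⟩ : ∃ x : ℝ, x = -Real.log K' := ⟨_, rfl⟩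
  have hlogK' : Real.log K' = -L := by rw [hLdef]; ring
  have hL : 2 * (C + 1) / (1 - K) < L := by
    have h := Real.log_lt_log hK'0 hK'exp
    rw [Real.log_exp] at h
    have h2 : -(2 * (C + 1)) / (1 - K) = -(2 * (C + 1) / (1 - K)) := by ring
    rw [h2] at h
    linarith
  have hL2 : 2 * (C + 1) < (1 - K) * L := by
    have := (div_lt_iff₀ hKlt1).mp hL
    linarith
  have hL2' : 2 * (2 * R ^ 2 * Real.log R + 1) < (1 - K) * L := by rw [← hCdef]; exact hL2
  have hLpos : 0 < L := by
    have h0 : 0 < 2 * (C + 1) / (1 - K) := by positivity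
    linarith
  have hLgt2 : 2 < L := by nlinarith
  have hinvL : 0 < 1 / L := by positivity
  -- key estimates
  have key : ∀ m : ℝ, |m - 1| ≤ 1 → ∀ r ∈ Icc a b,
      |(r + K) ^ m - (r + K)| ≤ R ^ 2 * Real.log R * |m - 1| ∧
      |r ^ m - r| ≤ R ^ 2 * Real.log R * |m - 1| ∧
      Ffun K K' m r = ((r + K) ^ m - (r + K)) - (r ^ m - r)
        + (1 - K) * (Real.exp (-((m - 1) * L)) - 1) := by
    intro m hm r hr
    obtain ⟨hra, hrb⟩ := hr
    have hr0 : 0 < r := lt_of_lt_of_le ha hra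
    have hrK0 : 0 < r + K := by linarith
    refine ⟨?_, ?_, ?_⟩
    · apply rpow_lip _ _ _ hrK0 (by linarith) ?_ hm hR1.le
      have h1 : 1 / (r + K) ≤ 1 / a := by
        apply div_le_div_of_nonneg_left one_pos.le ha
        linarith
      linarith
    · apply rpow_lip _ _ _ hr0 (by linarith) ?_ hm hR1.le
      have h1 : 1 / r ≤ 1 / a := by
        apply div_le_div_of_nonneg_left one_pos.le ha
        linarith
      linarith
    · have hKp : K' ^ (m - 1) = Real.exp (-((m - 1) * L)) := by
        rw [Real.rpow_def_of_pos hK'0, hlogK']; ring_nf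
      rw [Ffun, hKp]; ring
  refine ⟨1/2, by norm_num, 1 + 1/L, by simpa using hinvL, ?_, ?_⟩
  · -- m ∈ (1/2, 1)
    intro m hm r hr
    obtain ⟨hm1, hm2⟩ := hm
    have habs : |m - 1| = 1 - m := by rw [abs_of_nonpos (by linarith)]; ring
    have hm' : |m - 1| ≤ 1 := by rw [habs]; linarith
    obtain ⟨hA, hB, hF⟩ := key m hm' r hr
    rw [habs] at hA hB
    rw [abs_le] at hA hB
    have hexp : 1 + (1 - m) * L ≤ Real.exp (-((m - 1) * L)) := by
      have h := Real.add_one_le_exp ((1 - m) * L)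
      rw [show -((m - 1) * L) = (1 - m) * L by ring]
      linarith
    have hscale : (1 - K) * (1 + (1 - m) * L) ≤ (1 - K) * Real.exp (-((m - 1) * L)) :=
      mul_le_mul_of_nonneg_left hexp hKlt1.le
    have hprod : (1 - m) * (2 * (2 * R ^ 2 * Real.log R + 1)) < (1 - m) * ((1 - K) * L) :=
      mul_lt_mul_of_pos_left hL2' (by linarith)
    have hpos : 0 < (R ^ 2 * Real.log R) * (1 - m) := mul_pos hc (by linarith)
    rw [hF]
    nlinarith [hA.1, hB.2, hscale, hprod, hpos]
  · -- m ∈ (1, 1 + 1/L)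
    intro m hm r hr
    obtain ⟨hm1, hm2⟩ := hm
    have hs0 : 0 < (m - 1) * L := mul_pos (by linarith) hLpos
    have hs1 : (m - 1) * L < 1 := by
      have := mul_lt_mul_of_pos_right (show m - 1 < 1 / L by linarith) hLpos
      rwa [div_mul_cancel₀ _ (ne_of_gt hLpos)] at this
    have habs : |m - 1| = m - 1 := abs_of_nonneg (by linarith)
    have hm' : |m - 1| ≤ 1 := by rw [habs]; nlinarith
    obtain ⟨hA, hB, hF⟩ := key m hm' r hr
    rw [habs] at hA hB
    rw [abs_le] at hA hB
    have hexp : Real.exp (-((m - 1) * L)) ≤ 1 - (m - 1) * L / 2 := by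
      have hmul : Real.exp (-((m - 1) * L)) * Real.exp ((m - 1) * L) = 1 := by
        rw [← Real.exp_add]; simp
      have h1 : (1 + (m - 1) * L) * Real.exp (-((m - 1) * L)) ≤ 1 := by
        nlinarith [Real.add_one_le_exp ((m - 1) * L), Real.exp_pos (-((m - 1) * L))]
      have h2 : (1:ℝ) ≤ (1 + (m - 1) * L) * (1 - (m - 1) * L / 2) := by
        nlinarith [mul_pos hs0 (show (0:ℝ) < 1 - (m - 1) * L by linarith)]
      have h3 : (1 + (m - 1) * L) * Real.exp (-((m - 1) * L))
          ≤ (1 + (m - 1) * L) * (1 - (m - 1) * L / 2) := h1.trans h2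
      exact le_of_mul_le_mul_left h3 (by linarith)
    have hscale : (1 - K) * Real.exp (-((m - 1) * L)) ≤ (1 - K) * (1 - (m - 1) * L / 2) :=
      mul_le_mul_of_nonneg_left hexp hKlt1.le
    have hprod : (m - 1) * (2 * (2 * R ^ 2 * Real.log R + 1)) < (m - 1) * ((1 - K) * L) :=
      mul_lt_mul_of_pos_left hL2' (by linarith)
    rw [hF]
    nlinarith [hA.2, hB.1, hscale, hprod]
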